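/- Let m, d ≥ 1, let C > 0, and let W, W₀ : Fin m → ℝ^d. Suppose that for every x ∈ ℝ^d with ‖x‖ = 1 and every R > 0, | (1/m) · #{ i : |⟨W₀_i, x⟩| ≤ R } − γ_d{ w : |⟨w, x⟩| ≤ R } | ≤ m^{−1/3} + C √(d/m). Then for every x with ‖x‖ = 1, (1/m) · S_{W,W₀}(x) ≤ m^{−1/3} + C √(d/m) + 2^{4/3} · ‖W − W₀‖_F^{2/3} / (m^{1/3} π^{1/3}), where ‖W − W₀‖_F := √(Σ_i ‖W_i − W₀_i‖²). -/

import Mathlib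

open RealInnerProductSpace MeasureTheory

/-- The standard Gaussian measure on `EuclideanSpace ℝ (Fin d)`, i.e. the product
of `d` standard real Gaussian measures `N(0,1)`. -/
noncomputable def stdGaussian (d : ℕ) : Measure (EuclideanSpace ℝ (Fin d)) :=
  (Measure.pi fun _ : Fin d => ProbabilityTheory.gaussianReal 0 1).map
    (MeasurableEquiv.toLp 2 (Fin d → ℝ))

open Classical in
/-- The number of neurons whose activation sign at `x` differs between the
weights `W` and the weights `W₀`. -/
noncomputable def signFlips (m d : ℕ) (W W₀ : Fin m → EuclideanSpace ℝ (Fin d))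
    (x : EuclideanSpace ℝ (Fin d)) : ℕ :=
  (Finset.univ.filter fun i : Fin m => ¬((0 ≤ ⟪W i, x⟫) ↔ (0 ≤ ⟪W₀ i, x⟫))).card


open ProbabilityTheory Real
open scoped NNReal ENNReal
set_option maxHeartbeats 1000000

lemma sqrt_const_eq (A B : ℝ) (hA : 0 < A) (hB : 0 < B) :
    (√(2 * π * A))⁻¹ * (√(2 * π * B))⁻¹ * √(π / ((A + B) / (2 * A * B)))
      = (√(2 * π * (A + B)))⁻¹ := by
  have hπ := Real.pi_pos
  rw [← Real.sqrt_inv, ← Real.sqrt_inv, ← Real.sqrt_inv, ← Real.sqrt_mul (by positivity),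
    ← Real.sqrt_mul (by positivity)]
  congr 1
  field_simp

lemma pdf_conv_real (a b : ℝ≥0) (ha : a ≠ 0) (hb : b ≠ 0) (v : ℝ) :
    ∫ u, gaussianPDFReal 0 a u * gaussianPDFReal u b v = gaussianPDFReal 0 (a + b) v := by
  have hA : (0:ℝ) < a := lt_of_le_of_ne a.coe_nonneg (by exact_mod_cast (Ne.symm ha))
  have hB : (0:ℝ) < b := lt_of_le_of_ne b.coe_nonneg (by exact_mod_cast (Ne.symm hb))
  set A : ℝ := (a:ℝ)
  set B : ℝ := (b:ℝ)
  have hπ := Real.pi_pos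
  set k : ℝ := (A + B) / (2 * A * B) with hk
  have hkpos : 0 < k := by positivity
  set c : ℝ := A * v / (A + B) with hc
  have key : ∀ u : ℝ, gaussianPDFReal 0 a u * gaussianPDFReal u b v
      = ((√(2 * π * A))⁻¹ * (√(2 * π * B))⁻¹ * rexp (-v ^ 2 / (2 * (A + B))))
        * rexp (-k * (u - c) ^ 2) := by
    intro u
    simp only [gaussianPDFReal]
    have hexp : -(u - 0) ^ 2 / (2 * A) + -(v - u) ^ 2 / (2 * B)
        = -v ^ 2 / (2 * (A + B)) + -k * (u - c) ^ 2 := by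
      rw [hk, hc]; field_simp; ring
    rw [show (√(2 * π * ↑a))⁻¹ * rexp (-(u - 0) ^ 2 / (2 * ↑a)) *
        ((√(2 * π * ↑b))⁻¹ * rexp (-(v - u) ^ 2 / (2 * ↑b)))
      = (√(2 * π * ↑a))⁻¹ * (√(2 * π * ↑b))⁻¹ *
        (rexp (-(u - 0) ^ 2 / (2 * ↑a) + -(v - u) ^ 2 / (2 * ↑b))) by
        rw [Real.exp_add]; ring,
      hexp, Real.exp_add]
    ring
  rw [integral_congr_ae (Filter.Eventually.of_forall key), integral_const_mul,
    integral_sub_right_eq_self (fun u => rexp (-k * u ^ 2)) c, integral_gaussian]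
  have : gaussianPDFReal 0 (a + b) v
      = (√(2 * π * (A + B)))⁻¹ * rexp (-v ^ 2 / (2 * (A + B))) := by
    simp only [gaussianPDFReal, NNReal.coe_add, sub_zero]
    rfl
  rw [this, ← sqrt_const_eq A B hA hB, hk]
  ring

lemma measurable_pdf2 (a b : ℝ≥0) :
    Measurable (fun p : ℝ × ℝ => gaussianPDF 0 a p.1 * gaussianPDF p.1 b p.2) := by
  apply Measurable.mul (f := fun p : ℝ × ℝ => gaussianPDF 0 a p.1) (g := fun p : ℝ × ℝ => gaussianPDF p.1 b p.2)
  · exact (measurable_gaussianPDF 0 a).comp measurable_fst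
  · unfold gaussianPDF gaussianPDFReal
    exact ((((measurable_snd.sub measurable_fst).pow_const 2).neg.div_const
      _).exp.const_mul _).ennreal_ofReal

lemma gaussian_conv (a b : ℝ≥0) :
    ((gaussianReal 0 a).prod (gaussianReal 0 b)).map (fun p : ℝ × ℝ => p.1 + p.2)
      = gaussianReal 0 (a + b) := by
  by_cases ha : a = 0
  · subst ha
    rw [gaussianReal_zero_var, Measure.dirac_prod,
      Measure.map_map (show Measurable fun p : ℝ × ℝ => p.1 + p.2 from measurable_fst.add measurable_snd) (measurable_prodMk_left), zero_add]
    simp only [Function.comp_def, zero_add]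
    exact Measure.map_id
  by_cases hb : b = 0
  · subst hb
    rw [gaussianReal_zero_var, Measure.prod_dirac,
      Measure.map_map (show Measurable fun p : ℝ × ℝ => p.1 + p.2 from measurable_fst.add measurable_snd) (measurable_prodMk_right), add_zero]
    simp only [Function.comp_def, add_zero]
    exact Measure.map_id
  have hab : a + b ≠ 0 := by simp [ha]
  ext s hs
  rw [Measure.map_apply (show Measurable fun p : ℝ × ℝ => p.1 + p.2 from measurable_fst.add measurable_snd) hs,
    Measure.prod_apply ((show Measurable fun p : ℝ × ℝ => p.1 + p.2 from measurable_fst.add measurable_snd) hs)]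
  have step1 : ∀ u : ℝ, (gaussianReal 0 b) (Prod.mk u ⁻¹' ((fun p : ℝ × ℝ => p.1 + p.2) ⁻¹' s))
      = ∫⁻ v in s, gaussianPDF u b v := by
    intro u
    have : Prod.mk u ⁻¹' ((fun p : ℝ × ℝ => p.1 + p.2) ⁻¹' s) = (fun v => u + v) ⁻¹' s := rfl
    rw [this, ← Measure.map_apply (measurable_const_add u) hs, gaussianReal_map_const_add,
      zero_add, gaussianReal_apply _ hb]
  simp_rw [step1]
  have hmeas : Measurable fun u : ℝ => ∫⁻ v in s, gaussianPDF u b v := by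
    apply Measurable.lintegral_prod_right' (f := fun p : ℝ × ℝ => gaussianPDF p.1 b p.2)
    unfold gaussianPDF gaussianPDFReal
    exact ((((measurable_snd.sub measurable_fst).pow_const 2).neg.div_const
      _).exp.const_mul _).ennreal_ofReal
  rw [gaussianReal_of_var_ne_zero 0 ha,
    lintegral_withDensity_eq_lintegral_mul _ (measurable_gaussianPDF 0 a) hmeas]
  simp only [Pi.mul_apply]
  have hpull : ∀ u : ℝ, gaussianPDF 0 a u * ∫⁻ v in s, gaussianPDF u b v
      = ∫⁻ v in s, gaussianPDF 0 a u * gaussianPDF u b v := fun u =>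
    (lintegral_const_mul _ (measurable_gaussianPDF u b)).symm
  simp_rw [hpull]
  rw [lintegral_lintegral_swap (measurable_pdf2 a b).aemeasurable]
  have hsymm : ∀ u v : ℝ, gaussianPDFReal u b v = gaussianPDFReal v b u := by
    intro u v
    unfold gaussianPDFReal
    rw [show (v - u) ^ 2 = (u - v) ^ 2 by ring]
  have hbdd : ∀ u : ℝ, ‖gaussianPDFReal 0 a u‖ ≤ (√(2 * π * a))⁻¹ := by
    intro u
    rw [Real.norm_of_nonneg (gaussianPDFReal_nonneg _ _ _)]
    unfold gaussianPDFReal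
    have h1 : rexp (-(u - 0) ^ 2 / (2 * a)) ≤ 1 := by
      rw [Real.exp_le_one_iff]
      apply div_nonpos_of_nonpos_of_nonneg (neg_nonpos_of_nonneg (sq_nonneg _))
      positivity
    calc (√(2 * π * a))⁻¹ * rexp (-(u - 0) ^ 2 / (2 * a)) ≤ (√(2 * π * a))⁻¹ * 1 := by
          apply mul_le_mul_of_nonneg_left h1 (by positivity)
      _ = (√(2 * π * a))⁻¹ := mul_one _
  have hint : ∀ v : ℝ, Integrable (fun u => gaussianPDFReal 0 a u * gaussianPDFReal u b v) := by
    intro v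
    simp_rw [fun u => hsymm u v]
    exact (integrable_gaussianPDFReal v b).bdd_mul
      (stronglyMeasurable_gaussianPDFReal 0 a).aestronglyMeasurable (Filter.Eventually.of_forall hbdd)
  have hinner : ∀ v : ℝ, (∫⁻ u, gaussianPDF 0 a u * gaussianPDF u b v)
      = gaussianPDF 0 (a + b) v := by
    intro v
    unfold gaussianPDF
    simp_rw [← ENNReal.ofReal_mul (gaussianPDFReal_nonneg 0 a _)]
    rw [← ofReal_integral_eq_lintegral_ofReal (hint v)
      (Filter.Eventually.of_forall fun u =>
        mul_nonneg (gaussianPDFReal_nonneg _ _ _) (gaussianPDFReal_nonneg _ _ _)),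
      pdf_conv_real a b ha hb v]
  simp_rw [hinner]
  rw [← gaussianReal_apply _ hab]

lemma pi_gaussian_map : ∀ (n : ℕ) (x : Fin n → ℝ),
    (Measure.pi fun _ : Fin n => gaussianReal 0 1).map (fun y => ∑ i, x i * y i)
      = gaussianReal 0 (∑ i, (⟨x i ^ 2, sq_nonneg _⟩ : ℝ≥0)) := by
  intro n
  induction n with
  | zero =>
    intro x
    simp only [Finset.univ_eq_empty, Finset.sum_empty]
    rw [show (fun y : Fin 0 → ℝ => (0:ℝ)) = fun _ => 0 from rfl, Measure.map_const,
      measure_univ, one_smul]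
    exact (gaussianReal_zero_var 0).symm
  | succ n ih =>
    intro x
    have hmp := measurePreserving_piFinSuccAbove (fun _ : Fin (n+1) => gaussianReal 0 1) 0
    set e := MeasurableEquiv.piFinSuccAbove (fun _ : Fin (n+1) => ℝ) 0
    have h1 : (Measure.pi fun _ : Fin (n+1) => gaussianReal 0 1)
        = ((gaussianReal 0 1).prod (Measure.pi fun _ : Fin n => gaussianReal 0 1)).map e.symm := by
      rw [← hmp.map_eq, MeasurableEquiv.map_symm_map]
    have hsum : Measurable fun y : Fin (n+1) → ℝ => ∑ i, x i * y i :=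
      Finset.measurable_sum _ fun i _ => (measurable_pi_apply i).const_mul _
    rw [h1, Measure.map_map hsum e.symm.measurable]
    have hcomp : (fun y : Fin (n+1) → ℝ => ∑ i, x i * y i) ∘ e.symm
        = fun p : ℝ × (Fin n → ℝ) => x 0 * p.1 + ∑ j, x j.succ * p.2 j := by
      funext p
      simp only [Function.comp_apply, e, MeasurableEquiv.piFinSuccAbove,
        MeasurableEquiv.symm_mk, MeasurableEquiv.coe_mk, Equiv.symm_symm,
        Fin.insertNthEquiv_apply]
      rw [Fin.sum_univ_succ]
      simp [Fin.zero_succAbove]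
    rw [hcomp]
    have hg : Measurable fun z : Fin n → ℝ => ∑ j, x j.succ * z j :=
      Finset.measurable_sum _ fun i _ => (measurable_pi_apply i).const_mul _
    have h2 : (fun p : ℝ × (Fin n → ℝ) => x 0 * p.1 + ∑ j, x j.succ * p.2 j)
        = (fun q : ℝ × ℝ => q.1 + q.2) ∘
          (Prod.map (fun u => x 0 * u) (fun z => ∑ j, x j.succ * z j)) := rfl
    rw [h2, ← Measure.map_map (show Measurable fun p : ℝ × ℝ => p.1 + p.2 from measurable_fst.add measurable_snd)
      ((measurable_id'.const_mul (x 0)).prodMap hg),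
      ← Measure.map_prod_map _ _ (measurable_id'.const_mul (x 0)) hg,
      gaussianReal_map_const_mul, ih, mul_zero, mul_one, gaussian_conv]
    exact congrArg _ (Fin.sum_univ_succ (f := fun i : Fin (n+1) => (⟨x i ^ 2, sq_nonneg _⟩ : ℝ≥0))).symm

lemma measurable_inner_right (d : ℕ) (x : EuclideanSpace ℝ (Fin d)) :
    Measurable fun w : EuclideanSpace ℝ (Fin d) => ⟪w, x⟫ :=
  (continuous_id.inner continuous_const).measurable

lemma stdGaussian_map_inner (d : ℕ) (x : EuclideanSpace ℝ (Fin d)) (hx : ‖x‖ = 1) :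
    (stdGaussian d).map (fun w => ⟪w, x⟫) = gaussianReal 0 1 := by
  rw [_root_.stdGaussian, Measure.map_map (measurable_inner_right d x)
    (MeasurableEquiv.toLp 2 (Fin d → ℝ)).measurable]
  have hcomp : (fun w : EuclideanSpace ℝ (Fin d) => ⟪w, x⟫) ∘
      (MeasurableEquiv.toLp 2 (Fin d → ℝ))
      = fun y : Fin d → ℝ => ∑ i, x i * y i := by
    funext y
    simp only [Function.comp_apply, PiLp.inner_apply, RCLike.inner_apply, conj_trivial]
    exact Finset.sum_congr rfl fun i _ => rfl
  rw [hcomp, pi_gaussian_map]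
  congr 1
  have hsum : ∑ i, x i ^ 2 = 1 := by
    have h : √(∑ i, x i ^ 2) = 1 := by
      rw [← hx, EuclideanSpace.norm_eq]
      simp [Real.norm_eq_abs, sq_abs]
    rwa [Real.sqrt_eq_one] at h
  ext
  exact (NNReal.coe_sum _ _).trans hsum

lemma band_bound (d : ℕ) (x : EuclideanSpace ℝ (Fin d)) (hx : ‖x‖ = 1) (R : ℝ) (hR : 0 < R) :
    (stdGaussian d {w | |⟪w, x⟫| ≤ R}).toReal ≤ 2 * R / √(2 * π) := by
  have hπ := Real.pi_pos
  have hset : {w : EuclideanSpace ℝ (Fin d) | |⟪w, x⟫| ≤ R}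
      = (fun w => ⟪w, x⟫) ⁻¹' (Set.Icc (-R) R) := by
    ext w; simp [abs_le]
  rw [hset, ← Measure.map_apply (measurable_inner_right d x) measurableSet_Icc,
    stdGaussian_map_inner d x hx, gaussianReal_apply_eq_integral 0 one_ne_zero,
    ENNReal.toReal_ofReal (setIntegral_nonneg measurableSet_Icc
      fun t _ => gaussianPDFReal_nonneg _ _ _)]
  have hbdd : ∀ t ∈ Set.Icc (-R) R, gaussianPDFReal 0 1 t ≤ (√(2 * π))⁻¹ := by
    intro t _
    unfold gaussianPDFReal
    have h1 : rexp (-(t - 0) ^ 2 / (2 * (1:ℝ≥0))) ≤ 1 := by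
      rw [Real.exp_le_one_iff]
      apply div_nonpos_of_nonpos_of_nonneg (neg_nonpos_of_nonneg (sq_nonneg _))
      positivity
    calc (√(2 * π * (1:ℝ≥0)))⁻¹ * rexp (-(t - 0) ^ 2 / (2 * (1:ℝ≥0)))
        ≤ (√(2 * π * (1:ℝ≥0)))⁻¹ * 1 := mul_le_mul_of_nonneg_left h1 (by positivity)
      _ = (√(2 * π))⁻¹ := by norm_num
  calc ∫ t in Set.Icc (-R) R, gaussianPDFReal 0 1 t
      ≤ ∫ _ in Set.Icc (-R) R, (√(2 * π))⁻¹ :=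
        setIntegral_mono_on ((integrable_gaussianPDFReal 0 1).integrableOn)
          (integrableOn_const measure_Icc_lt_top.ne) measurableSet_Icc hbdd
    _ = 2 * R / √(2 * π) := by
        rw [setIntegral_const, Real.volume_real_Icc_of_le (by linarith), smul_eq_mul]
        field_simp
        ring

open Classical in
/-- If the empirical band counts of the initialization `W₀` concentrate uniformly
around their Gaussian values, then the fraction of sign flips is bounded by
`m^{-1/3} + C √(d/m) + 2^{4/3} ‖W - W₀‖_F^{2/3} / (m^{1/3} π^{1/3})`. -/
theorem signFlips_frac_le (m d : ℕ) (hm : 1 ≤ m) (hd : 1 ≤ d) (C : ℝ) (hC : 0 < C)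
    (W W₀ : Fin m → EuclideanSpace ℝ (Fin d))
    (hband : ∀ x : EuclideanSpace ℝ (Fin d), ‖x‖ = 1 → ∀ R : ℝ, 0 < R →
      |((1 : ℝ) / m) * ((Finset.univ.filter fun i : Fin m => |⟪W₀ i, x⟫| ≤ R).card : ℝ) -
          (stdGaussian d {w | |⟪w, x⟫| ≤ R}).toReal| ≤
        (m : ℝ) ^ (-(1 : ℝ) / 3) + C * Real.sqrt (d / m)) :
    ∀ x : EuclideanSpace ℝ (Fin d), ‖x‖ = 1 →
      ((1 : ℝ) / m) * (signFlips m d W W₀ x : ℝ) ≤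
        (m : ℝ) ^ (-(1 : ℝ) / 3) + C * Real.sqrt (d / m) +
          2 ^ ((4 : ℝ) / 3) * Real.sqrt (∑ i, ‖W i - W₀ i‖ ^ 2) ^ ((2 : ℝ) / 3) /
            ((m : ℝ) ^ ((1 : ℝ) / 3) * Real.pi ^ ((1 : ℝ) / 3)) := by
  intro x hx
  have hm0 : (0:ℝ) < m := by exact_mod_cast hm
  set F2 : ℝ := ∑ i, ‖W i - W₀ i‖ ^ 2 with hF2def
  have hF2nn : 0 ≤ F2 := hF2def ▸ Finset.sum_nonneg fun i _ => sq_nonneg _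
  clear_value F2
  have hε1 : (0:ℝ) ≤ (m:ℝ) ^ (-(1:ℝ)/3) := Real.rpow_nonneg hm0.le _
  have hε2 : (0:ℝ) ≤ C * Real.sqrt (d / m) := mul_nonneg hC.le (Real.sqrt_nonneg _)
  by_cases hF : F2 = 0
  · have hz : signFlips m d W W₀ x = 0 := by
      unfold signFlips
      rw [Finset.card_eq_zero, Finset.filter_eq_empty_iff]
      intro i _
      have h0 : ‖W i - W₀ i‖ ^ 2 = 0 :=
        (Finset.sum_eq_zero_iff_of_nonneg fun j _ => sq_nonneg ‖W j - W₀ j‖).mp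
          (hF2def ▸ hF) i (Finset.mem_univ i)
      have hWi : W i = W₀ i := by
        rw [pow_eq_zero_iff (by norm_num), norm_eq_zero, sub_eq_zero] at h0
        exact h0
      simp [hWi]
    rw [hz]
    have : (0:ℝ) ≤ 2 ^ ((4:ℝ)/3) * Real.sqrt F2 ^ ((2:ℝ)/3) /
        ((m:ℝ) ^ ((1:ℝ)/3) * π ^ ((1:ℝ)/3)) :=
      div_nonneg (mul_nonneg (Real.rpow_nonneg (by norm_num) _)
          (Real.rpow_nonneg (Real.sqrt_nonneg _) _))
        (mul_nonneg (Real.rpow_nonneg hm0.le _) (Real.rpow_nonneg Real.pi_pos.le _))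
    simp only [Nat.cast_zero, mul_zero]
    linarith
  have hF2pos : 0 < F2 := lt_of_le_of_ne hF2nn (Ne.symm hF)
  have hsF : 0 < Real.sqrt F2 := Real.sqrt_pos.mpr hF2pos
  set t : ℝ := (2:ℝ) ^ ((1:ℝ)/3) with htdef
  set s : ℝ := π ^ ((1:ℝ)/3) with hsdef
  set q : ℝ := (Real.sqrt F2) ^ ((1:ℝ)/3) with hqdef
  set r : ℝ := ((m:ℝ)) ^ ((1:ℝ)/3) with hrdef
  have ht : 0 < t := Real.rpow_pos_of_pos two_pos _
  have hs : 0 < s := Real.rpow_pos_of_pos Real.pi_pos _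
  have hq : 0 < q := Real.rpow_pos_of_pos hsF _
  have hr : 0 < r := Real.rpow_pos_of_pos hm0 _
  have cube : ∀ y : ℝ, 0 ≤ y → (y ^ ((1:ℝ)/3)) ^ (3:ℕ) = y := by
    intro y hy
    rw [← Real.rpow_natCast (y ^ ((1:ℝ)/3)) 3, ← Real.rpow_mul hy]
    norm_num
  have ht3 : t ^ 3 = 2 := cube 2 (by norm_num)
  have hs3 : s ^ 3 = π := cube π Real.pi_pos.le
  have hq3 : q ^ 3 = Real.sqrt F2 := cube _ (Real.sqrt_nonneg _)
  have hr3 : r ^ 3 = (m:ℝ) := cube _ hm0.le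
  set w : ℝ := Real.sqrt (t * s) with hwdef
  have hw : 0 < w := Real.sqrt_pos.mpr (by positivity)
  have hw2 : w ^ 2 = t * s := Real.sq_sqrt (by positivity)
  have hsqrt2pi : Real.sqrt (2 * π) = w ^ 3 := by
    have h6 : (w ^ 3) ^ 2 = 2 * π := by
      calc (w ^ 3) ^ 2 = (w ^ 2) ^ 3 := by ring
        _ = (t * s) ^ 3 := by rw [hw2]
        _ = 2 * π := by rw [mul_pow, ht3, hs3]
    rw [← h6, Real.sqrt_sq (by positivity)]
  have hF2q : F2 = q ^ 6 := by
    have h1 : Real.sqrt F2 ^ 2 = F2 := Real.sq_sqrt hF2nn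
    rw [← h1, ← hq3]; ring
  have hmr : (m:ℝ) = r ^ 3 := hr3.symm
  set R : ℝ := w * q ^ 2 / r with hRdef
  have hR : 0 < R := by positivity
  -- counting
  have hflipsub : (Finset.univ.filter fun i : Fin m => ¬((0 ≤ ⟪W i, x⟫) ↔ (0 ≤ ⟪W₀ i, x⟫)))
      ⊆ (Finset.univ.filter fun i : Fin m => |⟪W₀ i, x⟫| ≤ R)
        ∪ (Finset.univ.filter fun i : Fin m => R < ‖W i - W₀ i‖) := by
    intro i hi
    rw [Finset.mem_filter] at hi
    have hflip := hi.2
    have key : |⟪W₀ i, x⟫| ≤ ‖W i - W₀ i‖ := by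
      have h1 : |⟪W₀ i, x⟫| ≤ |⟪W i, x⟫ - ⟪W₀ i, x⟫| := by
        rcases le_or_gt 0 ⟪W i, x⟫ with h|h <;> rcases le_or_gt 0 ⟪W₀ i, x⟫ with h'|h'
        · exact absurd (iff_of_true h h') hflip
        · rw [abs_of_neg h']
          linarith [le_abs_self (⟪W i, x⟫ - ⟪W₀ i, x⟫)]
        · rw [abs_of_nonneg h']
          linarith [neg_abs_le (⟪W i, x⟫ - ⟪W₀ i, x⟫)]
        · exact absurd (iff_of_false (not_le.mpr h) (not_le.mpr h')) hflip
      calc |⟪W₀ i, x⟫| ≤ |⟪W i - W₀ i, x⟫| := by rwa [inner_sub_left]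
        _ ≤ ‖W i - W₀ i‖ * ‖x‖ := abs_real_inner_le_norm _ _
        _ = ‖W i - W₀ i‖ := by rw [hx, mul_one]
    rw [Finset.mem_union, Finset.mem_filter, Finset.mem_filter]
    rcases le_or_gt ‖W i - W₀ i‖ R with hle|hgt
    · exact Or.inl ⟨Finset.mem_univ i, key.trans hle⟩
    · exact Or.inr ⟨Finset.mem_univ i, hgt⟩
  have hbigcard : ((Finset.univ.filter fun i : Fin m => R < ‖W i - W₀ i‖).card : ℝ)
      ≤ F2 / R ^ 2 := by
    rw [le_div_iff₀ (by positivity)]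
    have h1 := Finset.card_nsmul_le_sum
      (Finset.univ.filter fun i : Fin m => R < ‖W i - W₀ i‖)
      (fun i => ‖W i - W₀ i‖ ^ 2) (R ^ 2)
      (fun i hi => by
        have h2 := (Finset.mem_filter.mp hi).2
        show R ^ 2 ≤ ‖W i - W₀ i‖ ^ 2
        nlinarith [mul_self_lt_mul_self hR.le h2])
    have h3 : ∑ i ∈ (Finset.univ.filter fun i : Fin m => R < ‖W i - W₀ i‖),
        ‖W i - W₀ i‖ ^ 2 ≤ ∑ i, ‖W i - W₀ i‖ ^ 2 :=
      Finset.sum_le_sum_of_subset_of_nonneg (Finset.subset_univ _)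
        (fun i _ _ => sq_nonneg _)
    rw [← hF2def] at h3
    have h4 : ((Finset.univ.filter fun i : Fin m => R < ‖W i - W₀ i‖).card : ℝ) * R ^ 2
        = (Finset.univ.filter fun i : Fin m => R < ‖W i - W₀ i‖).card • (R ^ 2) := by
      rw [nsmul_eq_mul]
    rw [h4]
    exact h1.trans h3
  have hcount : (signFlips m d W W₀ x : ℝ)
      ≤ ((Finset.univ.filter fun i : Fin m => |⟪W₀ i, x⟫| ≤ R).card : ℝ) + F2 / R ^ 2 := by
    have h2 : signFlips m d W W₀ x
        ≤ (Finset.univ.filter fun i : Fin m => |⟪W₀ i, x⟫| ≤ R).card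
          + (Finset.univ.filter fun i : Fin m => R < ‖W i - W₀ i‖).card :=
      (Finset.card_le_card hflipsub).trans (Finset.card_union_le _ _)
    have h2' : (signFlips m d W W₀ x : ℝ)
        ≤ ((Finset.univ.filter fun i : Fin m => |⟪W₀ i, x⟫| ≤ R).card : ℝ)
          + ((Finset.univ.filter fun i : Fin m => R < ‖W i - W₀ i‖).card : ℝ) := by
      exact_mod_cast h2
    linarith
  have hb := hband x hx R hR
  have hgb := band_bound d x hx R hR
  have hb1 : (1:ℝ)/m * ((Finset.univ.filter fun i : Fin m => |⟪W₀ i, x⟫| ≤ R).card : ℝ)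
      ≤ (m:ℝ) ^ (-(1:ℝ)/3) + C * Real.sqrt (d / m) + 2 * R / Real.sqrt (2 * π) := by
    have h3 := (abs_le.mp hb).2
    linarith
  -- key arithmetic
  have e1 : 2 * R / Real.sqrt (2 * π) = 2 * q ^ 2 / (r * (t * s)) := by
    rw [hsqrt2pi, hRdef, ← hw2]
    field_simp
  have e2 : F2 / ((m:ℝ) * R ^ 2) = q ^ 2 / (r * (t * s)) := by
    rw [hF2q, hmr, hRdef, ← hw2]
    field_simp
  have h3t : (3:ℝ) ≤ 2 * t ^ 2 := by
    have hfac : (2 * t ^ 2 - 3) * (4 * t ^ 4 + 6 * t ^ 2 + 9) = 8 * (t ^ 3) ^ 2 - 27 := by ring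
    rw [ht3] at hfac
    nlinarith [sq_nonneg t, pow_pos ht 2, pow_pos ht 4]
  have hkey : 2 * R / Real.sqrt (2 * π) + F2 / ((m:ℝ) * R ^ 2) ≤ t ^ 4 * q ^ 2 / (r * s) := by
    rw [e1, e2, ← add_div, div_le_div_iff₀ (by positivity) (by positivity)]
    have hrw : t ^ 4 * q ^ 2 * (r * (t * s)) = t ^ 3 * (t ^ 2 * q ^ 2 * r * s) := by ring
    rw [hrw, ht3]
    nlinarith [mul_pos (mul_pos (pow_pos hq 2) hr) hs]
  have h24 : (2:ℝ) ^ ((4:ℝ)/3) = t ^ 4 := by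
    rw [htdef, ← Real.rpow_natCast ((2:ℝ) ^ ((1:ℝ)/3)) 4, ← Real.rpow_mul (by norm_num : (0:ℝ) ≤ 2)]
    norm_num
  have h23 : Real.sqrt F2 ^ ((2:ℝ)/3) = q ^ 2 := by
    rw [hqdef, ← Real.rpow_natCast ((Real.sqrt F2) ^ ((1:ℝ)/3)) 2,
      ← Real.rpow_mul (Real.sqrt_nonneg _)]
    norm_num
  calc (1:ℝ)/m * (signFlips m d W W₀ x : ℝ)
      ≤ (1:ℝ)/m * (((Finset.univ.filter fun i : Fin m => |⟪W₀ i, x⟫| ≤ R).card : ℝ)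
          + F2 / R ^ 2) := by
        apply mul_le_mul_of_nonneg_left hcount (by positivity)
    _ = (1:ℝ)/m * ((Finset.univ.filter fun i : Fin m => |⟪W₀ i, x⟫| ≤ R).card : ℝ)
          + F2 / ((m:ℝ) * R ^ 2) := by
        ring
    _ ≤ ((m:ℝ) ^ (-(1:ℝ)/3) + C * Real.sqrt (d / m)) + (2 * R / Real.sqrt (2 * π)
          + F2 / ((m:ℝ) * R ^ 2)) := by linarith
    _ ≤ ((m:ℝ) ^ (-(1:ℝ)/3) + C * Real.sqrt (d / m)) + t ^ 4 * q ^ 2 / (r * s) := by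
        linarith
    _ = (m:ℝ) ^ (-(1:ℝ)/3) + C * Real.sqrt (d / m)
          + 2 ^ ((4:ℝ)/3) * Real.sqrt F2 ^ ((2:ℝ)/3) / (r * s) := by
        rw [h24, h23]
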